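/- arXiv:1109.1881 — 3 statements merged into one kernel-verified Lean document; each statement's English description precedes it below -/
import Mathlib

section
/- Let c₂, δ, x be real numbers with c₂ > 0 and δ ≥ 0, and suppose that P(α) := α²(3δ − x) + α(x − 2δ) + c₂ ≥ 0 for all α ∈ [0,1]. If δ ≥ 3c₂, then x ≥ 0. -/
/-- Numerical core of Proposition 3.5: if `P(α) = α²(3δ − x) + α(x − 2δ) + c₂ ≥ 0`
for all `α ∈ [0,1]`, `c₂ > 0`, `δ ≥ 0` and `δ ≥ 3c₂`, then `x ≥ 0`. -/
theorem stmt_0 (c₂ δ x : ℝ) (hc₂ : c₂ > 0) (hδ : δ ≥ 0)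
    (hP : ∀ α : ℝ, 0 ≤ α → α ≤ 1 → α ^ 2 * (3 * δ - x) + α * (x - 2 * δ) + c₂ ≥ 0)
    (h : δ ≥ 3 * c₂) : x ≥ 0 := by
  have := hP (1/3) (by norm_num) (by norm_num)
  nlinarith
end

section
/- Let c₂, δ, x be real numbers with c₂ > 0 and δ ≥ 0, and suppose that P(α) := α²(3δ − x) + α(x − 2δ) + c₂ ≥ 0 for all α ∈ [0,1]. If x < 0, then δ < 3c₂ and x ≥ 2(δ − 3c₂) ≥ −6c₂. -/
/-- Numerical core of Proposition 3.5: if `P(α) = α²(3δ − x) + α(x − 2δ) + c₂ ≥ 0`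
for all `α ∈ [0,1]`, `c₂ > 0`, `δ ≥ 0` and `x < 0`, then
`δ < 3c₂` and `x ≥ 2(δ − 3c₂) ≥ −6c₂`. -/
theorem stmt_1 (c₂ δ x : ℝ) (hc₂ : c₂ > 0) (hδ : δ ≥ 0)
    (hP : ∀ α : ℝ, 0 ≤ α → α ≤ 1 → α ^ 2 * (3 * δ - x) + α * (x - 2 * δ) + c₂ ≥ 0)
    (hx : x < 0) :
    δ < 3 * c₂ ∧ x ≥ 2 * (δ - 3 * c₂) ∧ 2 * (δ - 3 * c₂) ≥ -6 * c₂ := by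
  have ha : (0:ℝ) < 3 * δ - x := by linarith
  have hnum : (0:ℝ) < 2 * δ - x := by linarith
  set α : ℝ := (2 * δ - x) / (2 * (3 * δ - x)) with hα
  have h0 : 0 ≤ α := by positivity
  have h1 : α ≤ 1 := by
    rw [hα, div_le_one (by linarith)]
    linarith
  have h := hP α h0 h1
  rw [hα] at h
  have ha' : (2 * (3 * δ - x)) ≠ 0 := by positivity
  have key : (2 * δ - x) ^ 2 ≤ 4 * (3 * δ - x) * c₂ := by
    field_simp at h
    have hd : (0:ℝ) < δ * 3 - x := by linarith
    rw [div_add' _ _ _ hd.ne', le_div_iff₀ hd] at h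
    nlinarith [h, mul_pos ha ha]
  have hxge : x ≥ 2 * (δ - 3 * c₂) := by
    nlinarith [key, mul_pos hnum hc₂, mul_pos hc₂ hnum]
  exact ⟨by linarith, hxge, by linarith⟩
end

section
/- Let c₂, δ, x be real numbers with c₂ > 0 and δ ≥ 0, and suppose that P(α) := α²(3δ − x) + α(x − 2δ) + c₂ ≥ 0 for all α ∈ [0,1]. Then x ≥ 2δ − 2c₂ − 2√(c₂² + δc₂). -/
/-- Unconditional lower bound from the proof of Proposition 3.5: if
`P(α) = α²(3δ − x) + α(x − 2δ) + c₂ ≥ 0` for all `α ∈ [0,1]`, `c₂ > 0`, `δ ≥ 0`,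
then `x ≥ 2δ − 2c₂ − 2√(c₂² + δc₂)`. -/
theorem stmt_3 (c₂ δ x : ℝ) (hc₂ : c₂ > 0) (hδ : δ ≥ 0)
    (hP : ∀ α : ℝ, 0 ≤ α → α ≤ 1 → α ^ 2 * (3 * δ - x) + α * (x - 2 * δ) + c₂ ≥ 0) :
    x ≥ 2 * δ - 2 * c₂ - 2 * Real.sqrt (c₂ ^ 2 + δ * c₂) := by
  set s := Real.sqrt (c₂ ^ 2 + δ * c₂) with hs
  have hs0 : 0 ≤ s := Real.sqrt_nonneg _
  have hs2 : s ^ 2 = c₂ ^ 2 + δ * c₂ := by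
    rw [hs, Real.sq_sqrt]; nlinarith
  by_cases hx : x ≥ 2 * δ
  · nlinarith
  · push_neg at hx
    set t := 2 * δ - x with ht
    have htpos : 0 < t := by simp [ht]; linarith
    have ha : 0 < 3 * δ - x := by linarith
    set β := t / (2 * (3 * δ - x)) with hβ
    have hβ0 : 0 ≤ β := by positivity
    have hβ1 : β ≤ 1 := by
      rw [hβ, div_le_one (by linarith)]
      linarith
    have hβe : β * (2 * (3 * δ - x)) = t := div_mul_cancel₀ _ (by positivity)
    have key := hP β hβ0 hβ1
    have h4 : t ^ 2 ≤ 4 * (3 * δ - x) * c₂ := by nlinarith [sq_nonneg β]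
    -- t = 2δ - x, 3δ - x = t + δ
    nlinarith [sq_nonneg (t - 2 * c₂ - 2 * s), sq_nonneg (t - 2 * c₂ + 2 * s), mul_pos hc₂ htpos]
end
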